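/- For a behavioral defender with parameter α ∈ (0,1) in the two-parallel-path attack graph, the optimal investments minimizing the perceived loss max(e^{-x_{s1}^α - x_{12}^α - x_{24}^α - x_{45}^α}, e^{-x_{s1}^α - x_{13}^α - x_{34}^α - x_{45}^α}) subject to a budget B satisfy x_{12} = x_{24} = x_{13} = x_{34} = 2^{1/(α-1)} x_{s1} and x_{s1} = x_{45} = B / (2 + 4·2^{1/(α-1)}). -/

import Mathlib

open Real Set


lemma tangent_lt {α a x : ℝ} (h0 : 0 < α) (h1 : α < 1) (ha : 0 < a) (hx : 0 ≤ x)
    (hne : x ≠ a) : x ^ α < a ^ α + α * a ^ (α - 1) * (x - a) := by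
  set s : ℝ := x / a - 1 with hs_def
  have hs : -1 ≤ s := by
    have : 0 ≤ x / a := div_nonneg hx ha.le
    simp [hs_def]; linarith
  have hs' : s ≠ 0 := by
    simp only [hs_def, sub_ne_zero]
    intro h
    exact hne (by field_simp at h; linarith)
  have hb := rpow_one_add_lt_one_add_mul_self hs hs' h0 h1
  have hx_eq : x = a * (1 + s) := by rw [hs_def, add_sub_cancel]; field_simp
  have h1s : (0:ℝ) ≤ 1 + s := by linarith
  have hmul : x ^ α = a ^ α * (1 + s) ^ α := by
    rw [hx_eq, mul_rpow ha.le h1s]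
  have hpow : a ^ (α - 1) = a ^ α / a := by
    rw [rpow_sub ha, rpow_one]
  have hapos : 0 < a ^ α := rpow_pos_of_pos ha α
  calc x ^ α = a ^ α * (1 + s) ^ α := hmul
    _ < a ^ α * (1 + α * s) := by exact mul_lt_mul_of_pos_left hb hapos
    _ = a ^ α + α * a ^ (α - 1) * (x - a) := by
        rw [hpow, hs_def]; field_simp

lemma tangent_le {α a x : ℝ} (h0 : 0 < α) (h1 : α < 1) (ha : 0 < a) (hx : 0 ≤ x) :
    x ^ α ≤ a ^ α + α * a ^ (α - 1) * (x - a) := by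
  rcases eq_or_ne x a with rfl | hne
  · simp
  · exact (tangent_lt h0 h1 ha hx hne).le


/-- The behavioral defender's optimal investments in the two-parallel-path graph:
any minimizer of the perceived loss over nonnegative allocations summing to `B`
satisfies `x12 = x24 = x13 = x34 = 2^(1/(α-1)) · xs1` and
`xs1 = x45 = B / (2 + 4·2^(1/(α-1)))`. -/
theorem behavioral_optimal_investments (α B : ℝ) (hα : α ∈ Ioo (0:ℝ) 1) (hB : 0 < B)
    (xs1 x12 x24 x13 x34 x45 : ℝ)
    (hnn : 0 ≤ xs1 ∧ 0 ≤ x12 ∧ 0 ≤ x24 ∧ 0 ≤ x13 ∧ 0 ≤ x34 ∧ 0 ≤ x45)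
    (hsum : xs1 + x12 + x24 + x13 + x34 + x45 = B)
    (hopt : ∀ ys1 y12 y24 y13 y34 y45 : ℝ,
      (0 ≤ ys1 ∧ 0 ≤ y12 ∧ 0 ≤ y24 ∧ 0 ≤ y13 ∧ 0 ≤ y34 ∧ 0 ≤ y45) →
      ys1 + y12 + y24 + y13 + y34 + y45 = B →
      max (Real.exp (-(xs1 ^ α) - x12 ^ α - x24 ^ α - x45 ^ α))
          (Real.exp (-(xs1 ^ α) - x13 ^ α - x34 ^ α - x45 ^ α)) ≤
      max (Real.exp (-(ys1 ^ α) - y12 ^ α - y24 ^ α - y45 ^ α))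
          (Real.exp (-(ys1 ^ α) - y13 ^ α - y34 ^ α - y45 ^ α))) :
    x12 = (2:ℝ) ^ (1 / (α - 1)) * xs1 ∧
    x24 = (2:ℝ) ^ (1 / (α - 1)) * xs1 ∧
    x13 = (2:ℝ) ^ (1 / (α - 1)) * xs1 ∧
    x34 = (2:ℝ) ^ (1 / (α - 1)) * xs1 ∧
    xs1 = B / (2 + 4 * (2:ℝ) ^ (1 / (α - 1))) ∧
    x45 = B / (2 + 4 * (2:ℝ) ^ (1 / (α - 1))) := by
  obtain ⟨h0, h1⟩ := hα
  obtain ⟨n1, n2, n3, n4, n5, n6⟩ := hnn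
  set c : ℝ := (2:ℝ) ^ (1 / (α - 1)) with hc_def
  have hc : 0 < c := rpow_pos_of_pos two_pos _
  have hden : 0 < 2 + 4 * c := by linarith
  set t : ℝ := B / (2 + 4 * c) with ht_def
  have ht : 0 < t := div_pos hB hden
  have hct : 0 < c * t := mul_pos hc ht
  have hBt : 2 * t + 4 * (c * t) = B := by
    rw [ht_def]; field_simp
  -- specialize the optimality hypothesis at the candidate point
  have hspec := hopt t (c * t) (c * t) (c * t) (c * t) t
    ⟨ht.le, hct.le, hct.le, hct.le, hct.le, ht.le⟩ (by linarith)
  rw [max_self] at hspec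
  have hA1 : t ^ α + (c * t) ^ α + (c * t) ^ α + t ^ α ≤
      xs1 ^ α + x12 ^ α + x24 ^ α + x45 ^ α := by
    have := (le_max_left _ _).trans hspec
    rw [Real.exp_le_exp] at this
    linarith
  have hA2 : t ^ α + (c * t) ^ α + (c * t) ^ α + t ^ α ≤
      xs1 ^ α + x13 ^ α + x34 ^ α + x45 ^ α := by
    have := (le_max_right _ _).trans hspec
    rw [Real.exp_le_exp] at this
    linarith
  -- tangent-line bounds
  set L : ℝ := α * t ^ (α - 1) with hL_def
  have hc2 : c ^ (α - 1) = 2 := by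
    rw [hc_def, ← Real.rpow_mul (by norm_num : (0:ℝ) ≤ 2), one_div,
      inv_mul_cancel₀ (sub_ne_zero.mpr h1.ne), rpow_one]
  have hslope : α * (c * t) ^ (α - 1) = 2 * L := by
    rw [mul_rpow hc.le ht.le, hc2, hL_def]; ring
  have b1 : xs1 ^ α ≤ t ^ α + L * (xs1 - t) := tangent_le h0 h1 ht n1
  have b6 : x45 ^ α ≤ t ^ α + L * (x45 - t) := tangent_le h0 h1 ht n6
  have b2 : x12 ^ α ≤ (c * t) ^ α + 2 * L * (x12 - c * t) := by
    have := tangent_le h0 h1 hct n2 (x := x12); rwa [hslope] at this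
  have b3 : x24 ^ α ≤ (c * t) ^ α + 2 * L * (x24 - c * t) := by
    have := tangent_le h0 h1 hct n3 (x := x24); rwa [hslope] at this
  have b4 : x13 ^ α ≤ (c * t) ^ α + 2 * L * (x13 - c * t) := by
    have := tangent_le h0 h1 hct n4 (x := x13); rwa [hslope] at this
  have b5 : x34 ^ α ≤ (c * t) ^ α + 2 * L * (x34 - c * t) := by
    have := tangent_le h0 h1 hct n5 (x := x34); rwa [hslope] at this
  have hsum' : xs1 + x12 + x24 + x13 + x34 + x45 = 2 * t + 4 * (c * t) := by linarith
  have hz : 2 * (L * (xs1 - t)) + 2 * L * (x12 - c * t) + 2 * L * (x24 - c * t)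
      + 2 * L * (x13 - c * t) + 2 * L * (x34 - c * t) + 2 * (L * (x45 - t)) = 0 := by
    linear_combination (2 * L) * hsum'
  have e1 : xs1 = t := by
    by_contra hne
    have s := tangent_lt h0 h1 ht n1 hne
    rw [← hL_def] at s
    linarith
  have e6 : x45 = t := by
    by_contra hne
    have s := tangent_lt h0 h1 ht n6 hne
    rw [← hL_def] at s
    linarith
  have e2 : x12 = c * t := by
    by_contra hne
    have s := tangent_lt h0 h1 hct n2 hne
    rw [hslope] at s
    linarith
  have e3 : x24 = c * t := by
    by_contra hne
    have s := tangent_lt h0 h1 hct n3 hne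
    rw [hslope] at s
    linarith
  have e4 : x13 = c * t := by
    by_contra hne
    have s := tangent_lt h0 h1 hct n4 hne
    rw [hslope] at s
    linarith
  have e5 : x34 = c * t := by
    by_contra hne
    have s := tangent_lt h0 h1 hct n5 hne
    rw [hslope] at s
    linarith
  refine ⟨by rw [e2, e1], by rw [e3, e1], by rw [e4, e1], by rw [e5, e1], e1, e6⟩
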